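/- For positive integers x ≥ y and nonnegative integers a ≥ b, we have (x+a+1)···(x+a+y) − (b+1)···(b+y) > (a+1)···(a+y) − (x+b+1)···(x+b+y). -/
import Mathlib

lemma rising_prod_eq (c y : ℕ) :
    (∏ i ∈ Finset.Icc (c + 1) (c + y), (i : ℤ)) =
      ∏ j ∈ Finset.range y, ((c + 1 + j : ℕ) : ℤ) := by
  rw [← Finset.Ico_add_one_right_eq_Icc, Finset.prod_Ico_eq_prod_range]
  have h : c + y + 1 - (c + 1) = y := by omega
  rw [h]

lemma rising_prod_strict_mono (c d y : ℕ) (hy : 0 < y) (hcd : c < d) :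
    (∏ i ∈ Finset.Icc (c + 1) (c + y), (i : ℤ)) <
      ∏ i ∈ Finset.Icc (d + 1) (d + y), (i : ℤ) := by
  rw [rising_prod_eq, rising_prod_eq]
  apply Finset.prod_lt_prod_of_nonempty
  · intro i _; positivity
  · intro i _; exact_mod_cast by omega
  · exact Finset.nonempty_range_iff.mpr hy.ne'

/-- For positive integers `x ≥ y` and nonnegative integers `a ≥ b`:
`(x+a+1)···(x+a+y) − (b+1)···(b+y) > (a+1)···(a+y) − (x+b+1)···(x+b+y)`,
where `(c+1)···(c+y)` is the product of the `y` consecutive integers from `c+1` to `c+y`. -/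
theorem rising_product_difference_lt (x y a b : ℕ) (hx : 0 < x) (hy : 0 < y)
    (hxy : y ≤ x) (hab : b ≤ a) :
    (∏ i ∈ Finset.Icc (a + 1) (a + y), (i : ℤ)) -
        ∏ i ∈ Finset.Icc (x + b + 1) (x + b + y), (i : ℤ) <
      (∏ i ∈ Finset.Icc (x + a + 1) (x + a + y), (i : ℤ)) -
        ∏ i ∈ Finset.Icc (b + 1) (b + y), (i : ℤ) := by
  have h1 := rising_prod_strict_mono a (x + a) y hy (by omega)
  have h2 := rising_prod_strict_mono b (x + b) y hy (by omega)
  linarith
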